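/- Let V be a k-module. The module S̄(V) ⊗ S(V) (nonzero symmetric tensors tensor all symmetric tensors), with (X⊗Y)*(X'⊗Y') := X ⊗ (Y·X'·Y') and (X⊗Y)∙(X'⊗Y') := (X·X') ⊗ (Y·Y'), is a commutative trialgebra, and it satisfies the universal property of the free commutative trialgebra on V: any linear map f : V → T into a commutative trialgebra T extends uniquely to a trialgebra morphism S̄(V)⊗S(V) → T sending v ⊗ 1 to f(v). -/

import Mathlib

open TensorProduct

set_option synthInstance.maxHeartbeats 1000000
set_option maxHeartbeats 1000000

/-- A commutative trialgebra over a commutative ring `R`. -/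
structure CommTrialgebra (R : Type*) (A : Type*) [CommRing R] [AddCommGroup A]
    [Module R A] where
  star : A →ₗ[R] A →ₗ[R] A
  dot : A →ₗ[R] A →ₗ[R] A
  star_assoc : ∀ x y z : A, star (star x y) z = star x (star y z)
  star_perm : ∀ x y z : A, star x (star y z) = star x (star z y)
  dot_comm : ∀ x y : A, dot x y = dot y x
  dot_assoc : ∀ x y z : A, dot (dot x y) z = dot x (dot y z)
  compat₁ : ∀ x y z : A, star x (dot y z) = star x (star y z)
  compat₂ : ∀ x y z : A, star (dot x y) z = dot x (star y z)

namespace Stmt14Aux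

section Identities

variable {R T : Type} [CommRing R] [AddCommGroup T] [Module R T] (C : CommTrialgebra R T)

lemma star_dot (a b c : T) : C.star a (C.dot b c) = C.star (C.star a b) c := by
  rw [C.compat₁, C.star_assoc]

lemma dot_star (a b c : T) : C.dot a (C.star b c) = C.star (C.dot a b) c :=
  (C.compat₂ a b c).symm

lemma dot_star_star (a b c d : T) :
    C.dot (C.star a b) (C.star c d) = C.star (C.dot a c) (C.dot b d) := by
  rw [C.dot_comm, dot_star, C.dot_comm (C.star c d) a, dot_star, C.star_assoc,
    C.star_perm, ← C.compat₁]

lemma key_star (px py px' py' : T) (ey ey' : R) :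
    C.star px (ey' • (ey • px' + C.dot py px') + C.dot (ey • px' + C.dot py px') py')
      = C.star (ey • px + C.star px py) (ey' • px' + C.star px' py') := by
  simp only [map_add, map_smul, LinearMap.add_apply, LinearMap.smul_apply, smul_add, smul_smul]
  rw [star_dot C px (C.dot py px') py', star_dot C px py px', C.compat₁ px px' py',
    C.star_assoc (C.star px py) px' py']

lemma key_dot (px py px' py' : T) (ey ey' : R) :
    (ey * ey') • C.dot px px'
        + C.star (C.dot px px') (ey • py' + ey' • py + C.dot py py')
      = C.dot (ey • px + C.star px py) (ey' • px' + C.star px' py') := by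
  have h2 : C.star (C.dot px px') py = C.dot (C.star px py) px' := by
    rw [C.dot_comm px px', C.compat₂, C.dot_comm px']
  simp only [map_add, map_smul, LinearMap.add_apply, LinearMap.smul_apply, smul_add, smul_smul]
  rw [C.compat₂ px px' py', dot_star_star C px py px' py', h2, mul_comm ey ey']
  abel

end Identities

section Uni

variable {R T : Type} [CommRing R] [AddCommGroup T] [Module R T]

/-- Type synonym carrying the nonunital commutative ring structure given by `dot`. -/
def W (_CTT : CommTrialgebra R T) : Type := T

instance (CTT : CommTrialgebra R T) : AddCommGroup (W CTT) :=
  inferInstanceAs (AddCommGroup T)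

instance (CTT : CommTrialgebra R T) : Module R (W CTT) :=
  inferInstanceAs (Module R T)

instance (CTT : CommTrialgebra R T) : NonUnitalCommRing (W CTT) :=
  { (inferInstance : AddCommGroup (W CTT)) with
    mul := fun a b => CTT.dot a b
    left_distrib := fun a b c => map_add (CTT.dot a) b c
    right_distrib := fun a b c => by
      show CTT.dot (a + b) c = CTT.dot a c + CTT.dot b c
      exact LinearMap.congr_fun (map_add CTT.dot (a : T) b) c
    zero_mul := fun a => by
      show CTT.dot 0 a = 0
      rw [map_zero]; rfl
    mul_zero := fun a => map_zero (CTT.dot a)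
    mul_assoc := CTT.dot_assoc
    mul_comm := CTT.dot_comm }

instance (CTT : CommTrialgebra R T) : SMulCommClass R (W CTT) (W CTT) :=
  ⟨fun r a b => (map_smul (CTT.dot a) r b).symm⟩

instance (CTT : CommTrialgebra R T) : IsScalarTower R (W CTT) (W CTT) :=
  ⟨fun r a b => by
    show CTT.dot (r • a) b = r • CTT.dot a b
    exact LinearMap.congr_fun (map_smul CTT.dot r (a : T)) b⟩

/-- The inclusion of `T` into the unitization of `(T, dot)`, as a linear map. -/
def inrL (CTT : CommTrialgebra R T) : T →ₗ[R] Unitization R (W CTT) where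
  toFun t := Unitization.inr (t : W CTT)
  map_add' a b := by exact Unitization.inr_add R (a : W CTT) (b : W CTT)
  map_smul' r a := by exact Unitization.inr_smul R r (a : W CTT)

end Uni

section Free

variable {R V S : Type} [CommRing R] [AddCommGroup V] [Module R V]
  [CommRing S] [Algebra R S] (ι : V →ₗ[R] S)

/-- The augmentation ideal. -/
abbrev Ibar : Ideal S := Ideal.span (Set.range ι.toFun)

/-- The multiplication map `S̄ ⊗ S → S`. -/
noncomputable def mu : (Ibar ι ⊗[R] S) →ₗ[R] S :=
  TensorProduct.lift ((LinearMap.mul R S).comp ((Ibar ι).subtype.restrictScalars R))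

/-- The `*` operation of the trialgebra. -/
noncomputable def starB : (Ibar ι ⊗[R] S) →ₗ[R] (Ibar ι ⊗[R] S) →ₗ[R] (Ibar ι ⊗[R] S) :=
  (LinearMap.lTensorHom (M := Ibar ι) (R := R) (N := S) (P := S) ∘ₗ
    ((LinearMap.mul R S).flip.comp (mu ι))).flip

@[simp] lemma starB_tmul (x x' : Ibar ι) (y y' : S) :
    starB ι (x ⊗ₜ[R] y) (x' ⊗ₜ[R] y') = x ⊗ₜ[R] (y * (x' : S) * y') := by
  show x ⊗ₜ[R] (y * ((x' : S) * y')) = _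
  rw [mul_assoc]

/-- Multiplication on the augmentation ideal, as an `R`-bilinear map. -/
noncomputable def dotI : Ibar ι →ₗ[R] Ibar ι →ₗ[R] Ibar ι :=
  LinearMap.mk₂ R (fun x y => ⟨(x : S) * (y : S), Ideal.mul_mem_right _ _ x.2⟩)
    (fun x x' y => Subtype.ext (by simp [add_mul]))
    (fun r x y => Subtype.ext (by simp [smul_mul_assoc]))
    (fun x y y' => Subtype.ext (by simp [mul_add]))
    (fun r x y => Subtype.ext (by simp [mul_smul_comm]))

/-- The `∙` operation of the trialgebra. -/
noncomputable def dotB : (Ibar ι ⊗[R] S) →ₗ[R] (Ibar ι ⊗[R] S) →ₗ[R] (Ibar ι ⊗[R] S) :=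
  TensorProduct.map₂ (dotI ι) (LinearMap.mul R S)

@[simp] lemma dotB_tmul (x x' : Ibar ι) (y y' : S) :
    dotB ι (x ⊗ₜ[R] y) (x' ⊗ₜ[R] y')
      = (⟨(x : S) * (x' : S), Ideal.mul_mem_right _ _ x.2⟩ : Ibar ι) ⊗ₜ[R] (y * y') := by
  simp [dotB, dotI]

lemma starB_assoc (a b c : Ibar ι ⊗[R] S) :
    starB ι (starB ι a b) c = starB ι a (starB ι b c) := by
  induction a using TensorProduct.induction_on with
  | zero => simp
  | add u v hu hv => simp [hu, hv]
  | tmul x y =>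
    induction b using TensorProduct.induction_on with
    | zero => simp
    | add u v hu hv => simp [hu, hv]
    | tmul x' y' =>
      induction c using TensorProduct.induction_on with
      | zero => simp
      | add u v hu hv => simp only [starB_tmul, dotB_tmul] at hu hv; simp [hu, hv]
      | tmul x'' y'' =>
        simp only [starB_tmul]
        congr 1
        ring

lemma starB_perm (a b c : Ibar ι ⊗[R] S) :
    starB ι a (starB ι b c) = starB ι a (starB ι c b) := by
  induction a using TensorProduct.induction_on with
  | zero => simp
  | add u v hu hv => simp [hu, hv]
  | tmul x y =>
    induction b using TensorProduct.induction_on with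
    | zero => simp
    | add u v hu hv => simp [hu, hv]
    | tmul x' y' =>
      induction c using TensorProduct.induction_on with
      | zero => simp
      | add u v hu hv => simp [hu, hv]
      | tmul x'' y'' =>
        simp only [starB_tmul]
        congr 1
        ring

lemma dotB_comm (a b : Ibar ι ⊗[R] S) : dotB ι a b = dotB ι b a := by
  induction a using TensorProduct.induction_on with
  | zero => simp
  | add u v hu hv => simp [hu, hv]
  | tmul x y =>
    induction b using TensorProduct.induction_on with
    | zero => simp
    | add u v hu hv => simp [hu, hv]
    | tmul x' y' =>
      simp only [dotB_tmul]
      rw [mul_comm y y']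
      congr 1
      exact Subtype.ext (mul_comm _ _)

lemma dotB_assoc (a b c : Ibar ι ⊗[R] S) :
    dotB ι (dotB ι a b) c = dotB ι a (dotB ι b c) := by
  induction a using TensorProduct.induction_on with
  | zero => simp
  | add u v hu hv => simp [hu, hv]
  | tmul x y =>
    induction b using TensorProduct.induction_on with
    | zero => simp
    | add u v hu hv => simp [hu, hv]
    | tmul x' y' =>
      induction c using TensorProduct.induction_on with
      | zero => simp
      | add u v hu hv => simp only [starB_tmul, dotB_tmul] at hu hv; simp [hu, hv]
      | tmul x'' y'' =>
        simp only [dotB_tmul]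
        rw [mul_assoc y y' y'']
        congr 1
        exact Subtype.ext (mul_assoc _ _ _)

lemma starB_compat₁ (a b c : Ibar ι ⊗[R] S) :
    starB ι a (dotB ι b c) = starB ι a (starB ι b c) := by
  induction a using TensorProduct.induction_on with
  | zero => simp
  | add u v hu hv => simp [hu, hv]
  | tmul x y =>
    induction b using TensorProduct.induction_on with
    | zero => simp
    | add u v hu hv => simp [hu, hv]
    | tmul x' y' =>
      induction c using TensorProduct.induction_on with
      | zero => simp
      | add u v hu hv => simp [hu, hv]
      | tmul x'' y'' =>
        simp only [dotB_tmul, starB_tmul]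
        congr 1
        ring

lemma starB_compat₂ (a b c : Ibar ι ⊗[R] S) :
    starB ι (dotB ι a b) c = dotB ι a (starB ι b c) := by
  induction a using TensorProduct.induction_on with
  | zero => simp
  | add u v hu hv => simp [hu, hv]
  | tmul x y =>
    induction b using TensorProduct.induction_on with
    | zero => simp
    | add u v hu hv => simp [hu, hv]
    | tmul x' y' =>
      induction c using TensorProduct.induction_on with
      | zero => simp
      | add u v hu hv => simp only [starB_tmul, dotB_tmul] at hu hv; simp [hu, hv]
      | tmul x'' y'' =>
        simp only [dotB_tmul, starB_tmul]
        congr 1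
        ring

/-- The commutative trialgebra structure on `S̄ ⊗ S`. -/
noncomputable def ct : CommTrialgebra R (Ibar ι ⊗[R] S) where
  star := starB ι
  dot := dotB ι
  star_assoc := starB_assoc ι
  star_perm := starB_perm ι
  dot_comm := dotB_comm ι
  dot_assoc := dotB_assoc ι
  compat₁ := starB_compat₁ ι
  compat₂ := starB_compat₂ ι

end Free

end Stmt14Aux

open Stmt14Aux

/-- free commutative trialgebra: Let `V` be a module over a
commutative ring `R`, and let `S` (together with `ι : V →ₗ[R] S`) be the symmetric
algebra of `V`, characterized by its universal property among commutative
`R`-algebras (hypothesis `hS`).  Let `S̄` be its augmentation ideal, the ideal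
generated by the image of `V`.  Then the module `S̄ ⊗ S` carries a commutative
trialgebra structure with `(X⊗Y) * (X'⊗Y') = X ⊗ (Y·X'·Y')` and
`(X⊗Y) ∙ (X'⊗Y') = (X·X') ⊗ (Y·Y')` on pure tensors, and it satisfies the
universal property of the free commutative trialgebra on `V`: every linear map
`f : V → T` to a commutative trialgebra `T` extends uniquely to a morphism of
trialgebras `S̄ ⊗ S → T` sending `ι v ⊗ 1` to `f v`. -/
theorem stmt_14 (R V S : Type) [CommRing R] [AddCommGroup V] [Module R V]
    [CommRing S] [Algebra R S] (ι : V →ₗ[R] S)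
    (hS : ∀ (A : Type) [CommRing A] [Algebra R A] (f : V →ₗ[R] A),
      ∃! g : S →ₐ[R] A, ∀ v : V, g (ι v) = f v) :
    ∃ CT : CommTrialgebra R ((Ideal.span (Set.range ι.toFun) : Ideal S) ⊗[R] S),
      (∀ (x x' : (Ideal.span (Set.range ι.toFun) : Ideal S)) (y y' : S),
        CT.star (x ⊗ₜ[R] y) (x' ⊗ₜ[R] y') = x ⊗ₜ[R] (y * (x' : S) * y')) ∧
      (∀ (x x' : (Ideal.span (Set.range ι.toFun) : Ideal S)) (y y' : S),
        CT.dot (x ⊗ₜ[R] y) (x' ⊗ₜ[R] y')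
          = (⟨(x : S) * (x' : S), Ideal.mul_mem_right _ _ x.2⟩ :
              (Ideal.span (Set.range ι.toFun) : Ideal S)) ⊗ₜ[R] (y * y')) ∧
      (∀ (T : Type) [AddCommGroup T] [Module R T] (CTT : CommTrialgebra R T)
          (f : V →ₗ[R] T),
        ∃! g : ((Ideal.span (Set.range ι.toFun) : Ideal S) ⊗[R] S) →ₗ[R] T,
          (∀ v : V,
            g ((⟨ι v, Ideal.subset_span ⟨v, rfl⟩⟩ :
                (Ideal.span (Set.range ι.toFun) : Ideal S)) ⊗ₜ[R] (1 : S))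
              = f v) ∧
          (∀ a b, g (CT.star a b) = CTT.star (g a) (g b)) ∧
          (∀ a b, g (CT.dot a b) = CTT.dot (g a) (g b))) := by
  classical
  -- generation of `S` by the image of `ι`
  have htop : ∀ x : S, x ∈ Algebra.adjoin R (Set.range ι.toFun) := by
    obtain ⟨u, -, huniq⟩ := hS S ι
    have hmem : ∀ v, ι v ∈ Algebra.adjoin R (Set.range ι.toFun) :=
      fun v => Algebra.subset_adjoin ⟨v, rfl⟩
    let ι' : V →ₗ[R] (Algebra.adjoin R (Set.range ι.toFun)) :=
      { toFun := fun v => ⟨ι v, hmem v⟩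
        map_add' := fun a b => Subtype.ext (map_add ι a b)
        map_smul' := fun r a => Subtype.ext (map_smul ι r a) }
    obtain ⟨j, hj, -⟩ := hS (Algebra.adjoin R (Set.range ι.toFun)) ι'
    have h1 : (Algebra.adjoin R (Set.range ι.toFun)).val.comp j = u :=
      huniq _ (fun v => by
        show (Algebra.adjoin R (Set.range ι.toFun)).val (j (ι v)) = ι v
        rw [hj v]
        rfl)
    have h2 : AlgHom.id R S = u := huniq _ (fun v => rfl)
    intro x
    have hx : (Algebra.adjoin R (Set.range ι.toFun)).val (j x) = x := by
      have := DFunLike.congr_fun (h1.trans h2.symm) x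
      simpa using this
    exact hx ▸ (j x).2
  refine ⟨ct ι, starB_tmul ι, dotB_tmul ι, ?_⟩
  intro T _ _ CTT f
  -- the algebra map into the unitization of `(T, dot)`
  obtain ⟨Φ, hΦ, -⟩ := hS (Unitization R (W CTT)) ((inrL CTT).comp f)
  let ε : S →ₐ[R] R := (Unitization.fstHom R (W CTT)).comp Φ
  let φ : S →ₗ[R] T :=
    { toFun := fun s => (Φ s).snd
      map_add' := fun a b => by simp; rfl
      map_smul' := fun r a => by simp; rfl }
  have hφmul : ∀ a b : S, φ (a * b) = ε a • φ b + ε b • φ a + CTT.dot (φ a) (φ b) := by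
    intro a b
    show (Φ (a * b)).snd = _
    rw [map_mul, Unitization.snd_mul]
    rfl
  have hε0 : ∀ {x : S}, x ∈ Ibar ι → ε x = 0 := by
    intro x hx
    have hle : Ibar ι ≤ RingHom.ker (ε : S →+* R) := by
      rw [Ideal.span_le]
      rintro _ ⟨v, rfl⟩
      show ε (ι v) = 0
      show (Φ (ι v)).fst = 0
      rw [hΦ v]
      rfl
    exact hle hx
  have hφι : ∀ v, φ (ι v) = f v := by
    intro v
    show (Φ (ι v)).snd = f v
    rw [hΦ v]
    rfl
  have hε1 : ε 1 = 1 := map_one ε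
  have hφ1 : φ 1 = 0 := by
    show (Φ 1).snd = 0
    rw [map_one]
    rfl
  -- the extension
  let G : Ibar ι →ₗ[R] S →ₗ[R] T :=
    LinearMap.mk₂ R (fun x y => ε y • φ (x : S) + CTT.star (φ (x : S)) (φ y))
      (fun x x' y => by
        simp only [Submodule.coe_add, map_add, LinearMap.add_apply, smul_add]
        abel)
      (fun r x y => by
        simp only [SetLike.val_smul, Submodule.coe_smul_of_tower, map_smul,
          LinearMap.smul_apply, smul_add, smul_smul, mul_comm])
      (fun x y y' => by
        simp only [map_add, LinearMap.add_apply, add_smul]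
        abel)
      (fun r x y => by
        simp only [map_smul, LinearMap.smul_apply, smul_add, smul_smul, smul_eq_mul,
          mul_comm])
  let g : (Ibar ι ⊗[R] S) →ₗ[R] T := TensorProduct.lift G
  have g_tmul : ∀ (x : Ibar ι) (y : S),
      g (x ⊗ₜ[R] y) = ε y • φ (x : S) + CTT.star (φ (x : S)) (φ y) := fun x y => rfl
  -- the three properties of g
  have hga : ∀ v : V,
      g ((⟨ι v, Ideal.subset_span ⟨v, rfl⟩⟩ : Ibar ι) ⊗ₜ[R] (1 : S)) = f v := by
    intro v
    rw [g_tmul, hε1, hφ1, hφι, map_zero, one_smul, add_zero]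
  have hgb : ∀ a b, g ((ct ι).star a b) = CTT.star (g a) (g b) := by
    intro a b
    show g (starB ι a b) = _
    induction a using TensorProduct.induction_on with
    | zero => simp
    | add u v hu hv => simp only [map_add, LinearMap.add_apply, hu, hv]
    | tmul x y =>
      induction b using TensorProduct.induction_on with
      | zero => simp
      | add u v hu hv => simp only [map_add, LinearMap.add_apply, hu, hv]
      | tmul x' y' =>
        rw [starB_tmul, g_tmul, g_tmul, g_tmul]
        have e0 : ε (y * (x' : S) * y') = 0 := by
          rw [map_mul, map_mul, hε0 x'.2, mul_zero, zero_mul]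
        have e1 : φ (y * (x' : S) * y')
            = ε y' • (ε y • φ (x' : S) + CTT.dot (φ y) (φ (x' : S)))
              + CTT.dot (ε y • φ (x' : S) + CTT.dot (φ y) (φ (x' : S))) (φ y') := by
          rw [hφmul (y * (x' : S)) y', hφmul y (x' : S), hε0 x'.2, map_mul, hε0 x'.2]
          simp
        rw [e0, zero_smul, zero_add, e1]
        exact key_star CTT (φ (x : S)) (φ y) (φ (x' : S)) (φ y') (ε y) (ε y')
  have hgc : ∀ a b, g ((ct ι).dot a b) = CTT.dot (g a) (g b) := by
    intro a b
    show g (dotB ι a b) = _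
    induction a using TensorProduct.induction_on with
    | zero => simp
    | add u v hu hv => simp only [map_add, LinearMap.add_apply, hu, hv]
    | tmul x y =>
      induction b using TensorProduct.induction_on with
      | zero => simp
      | add u v hu hv => simp only [map_add, LinearMap.add_apply, hu, hv]
      | tmul x' y' =>
        rw [dotB_tmul, g_tmul, g_tmul, g_tmul]
        have d1 : φ ((x : S) * (x' : S)) = CTT.dot (φ (x : S)) (φ (x' : S)) := by
          rw [hφmul, hε0 x.2, hε0 x'.2, zero_smul, zero_smul, zero_add, zero_add]
        show ε (y * y') • φ ((x:S) * (x':S)) + CTT.star (φ ((x:S)*(x':S))) (φ (y * y')) = _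
        rw [map_mul, d1, hφmul y y']
        exact key_dot CTT (φ (x : S)) (φ y) (φ (x' : S)) (φ y') (ε y) (ε y')
  refine ⟨g, ⟨hga, hgb, hgc⟩, ?_⟩
  rintro g' ⟨h1, h2, h3⟩
  have h2' : ∀ a b : Ibar ι ⊗[R] S, g' ((ct ι).star a b) = CTT.star (g' a) (g' b) := h2
  have h3' : ∀ a b : Ibar ι ⊗[R] S, g' ((ct ι).dot a b) = CTT.dot (g' a) (g' b) := h3
  -- uniqueness
  have step1 : ∀ (x : S) (hx : x ∈ Ibar ι),
      g' ((⟨x, hx⟩ : Ibar ι) ⊗ₜ[R] (1:S)) = g ((⟨x, hx⟩ : Ibar ι) ⊗ₜ[R] (1:S)) := by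
    have base : ∀ (v : V) (h : ι v ∈ Ibar ι),
        g' ((⟨ι v, h⟩ : Ibar ι) ⊗ₜ[R] (1:S)) = g ((⟨ι v, h⟩ : Ibar ι) ⊗ₜ[R] (1:S)) := by
      intro v h
      rw [show ((⟨ι v, h⟩ : Ibar ι)) = ⟨ι v, Ideal.subset_span ⟨v, rfl⟩⟩ from rfl,
        h1 v, hga v]
    have mulr : ∀ (y : S) (x : S) (hx : x ∈ Ibar ι),
        g' ((⟨x, hx⟩ : Ibar ι) ⊗ₜ[R] (1:S)) = g ((⟨x, hx⟩ : Ibar ι) ⊗ₜ[R] (1:S)) →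
        g' ((⟨x * y, Ideal.mul_mem_right _ _ hx⟩ : Ibar ι) ⊗ₜ[R] (1:S))
          = g ((⟨x * y, Ideal.mul_mem_right _ _ hx⟩ : Ibar ι) ⊗ₜ[R] (1:S)) := by
      intro y
      refine Algebra.adjoin_induction
        (p := fun y _ => ∀ (x : S) (hx : x ∈ Ibar ι),
          g' ((⟨x, hx⟩ : Ibar ι) ⊗ₜ[R] (1:S)) = g ((⟨x, hx⟩ : Ibar ι) ⊗ₜ[R] (1:S)) →
          g' ((⟨x * y, Ideal.mul_mem_right _ _ hx⟩ : Ibar ι) ⊗ₜ[R] (1:S))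
            = g ((⟨x * y, Ideal.mul_mem_right _ _ hx⟩ : Ibar ι) ⊗ₜ[R] (1:S)))
        ?_ ?_ ?_ ?_ (htop y)
      · rintro _ ⟨w, rfl⟩ x hx hx1
        simp only [LinearMap.toFun_eq_coe]
        have key : ((⟨x * ι w, Ideal.mul_mem_right _ _ hx⟩ : Ibar ι) ⊗ₜ[R] (1:S))
            = (ct ι).dot ((⟨x, hx⟩ : Ibar ι) ⊗ₜ[R] (1:S))
                ((⟨ι w, Ideal.subset_span ⟨w, rfl⟩⟩ : Ibar ι) ⊗ₜ[R] (1:S)) := by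
          show _ = dotB ι _ _
          rw [dotB_tmul, mul_one]
        rw [key]
        refine (h3' _ _).trans ?_
        rw [hx1, base w (Ideal.subset_span ⟨w, rfl⟩)]
        exact (hgc _ _).symm
      · intro r x hx hx1
        have key : ((⟨x * algebraMap R S r, Ideal.mul_mem_right _ _ hx⟩ : Ibar ι) ⊗ₜ[R] (1:S))
            = r • (((⟨x, hx⟩ : Ibar ι)) ⊗ₜ[R] (1:S)) := by
          rw [TensorProduct.smul_tmul']
          congr 1
          exact Subtype.ext (by simp [Algebra.smul_def, mul_comm])
        rw [key, map_smul, map_smul, hx1]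
      · intro y1 y2 _ _ ih1 ih2 x hx hx1
        have key : ((⟨x * (y1 + y2), Ideal.mul_mem_right _ _ hx⟩ : Ibar ι) ⊗ₜ[R] (1:S))
            = ((⟨x * y1, Ideal.mul_mem_right _ _ hx⟩ : Ibar ι) ⊗ₜ[R] (1:S))
              + ((⟨x * y2, Ideal.mul_mem_right _ _ hx⟩ : Ibar ι) ⊗ₜ[R] (1:S)) := by
          rw [← TensorProduct.add_tmul]
          congr 1
          exact Subtype.ext (mul_add x y1 y2)
        rw [key, map_add, map_add, ih1 x hx hx1, ih2 x hx hx1]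
      · intro y1 y2 _ _ ih1 ih2 x hx hx1
        have key : ((⟨x * (y1 * y2), Ideal.mul_mem_right _ _ hx⟩ : Ibar ι))
            = ⟨x * y1 * y2, Ideal.mul_mem_right _ _ (Ideal.mul_mem_right _ _ hx)⟩ :=
          Subtype.ext (mul_assoc x y1 y2).symm
        rw [key]
        exact ih2 (x * y1) (Ideal.mul_mem_right _ _ hx) (ih1 x hx hx1)
    intro x hx
    refine Submodule.span_induction
      (p := fun x hx => g' ((⟨x, hx⟩ : Ibar ι) ⊗ₜ[R] (1:S))
        = g ((⟨x, hx⟩ : Ibar ι) ⊗ₜ[R] (1:S)))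
      ?_ ?_ ?_ ?_ hx
    · rintro _ ⟨v, rfl⟩
      exact base v _
    · show g' (((0 : Ibar ι)) ⊗ₜ[R] (1:S)) = g (((0 : Ibar ι)) ⊗ₜ[R] (1:S))
      rw [TensorProduct.zero_tmul, map_zero, map_zero]
    · intro a b ha hb iha ihb
      have key : ((⟨a + b, Submodule.add_mem _ ha hb⟩ : Ibar ι) ⊗ₜ[R] (1:S))
          = ((⟨a, ha⟩ : Ibar ι) ⊗ₜ[R] (1:S)) + ((⟨b, hb⟩ : Ibar ι) ⊗ₜ[R] (1:S)) := by
        rw [← TensorProduct.add_tmul]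
        rfl
      rw [key, map_add, map_add, iha, ihb]
    · intro s a ha iha
      have key : ((⟨s • a, Submodule.smul_mem _ s ha⟩ : Ibar ι))
          = ⟨a * s, Ideal.mul_mem_right _ _ ha⟩ := Subtype.ext (mul_comm s a)
      rw [key]
      exact mulr s a ha iha
  have step2 : ∀ (y : S) (x : Ibar ι), g' (x ⊗ₜ[R] y) = g (x ⊗ₜ[R] y) := by
    have q : ∀ (s : S), ∀ y : S, (∀ x : Ibar ι, g' (x ⊗ₜ[R] y) = g (x ⊗ₜ[R] y)) →
        ∀ x : Ibar ι, g' (x ⊗ₜ[R] (s * y)) = g (x ⊗ₜ[R] (s * y)) := by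
      intro s
      refine Algebra.adjoin_induction
        (p := fun s _ => ∀ y : S, (∀ x : Ibar ι, g' (x ⊗ₜ[R] y) = g (x ⊗ₜ[R] y)) →
          ∀ x : Ibar ι, g' (x ⊗ₜ[R] (s * y)) = g (x ⊗ₜ[R] (s * y)))
        ?_ ?_ ?_ ?_ (htop s)
      · rintro _ ⟨w, rfl⟩ y hy x
        simp only [LinearMap.toFun_eq_coe]
        have key : x ⊗ₜ[R] (ι w * y)
            = (ct ι).star (x ⊗ₜ[R] (1:S))
                ((⟨ι w, Ideal.subset_span ⟨w, rfl⟩⟩ : Ibar ι) ⊗ₜ[R] y) := by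
          show _ = starB ι _ _
          rw [starB_tmul, one_mul]
        rw [key]
        refine (h2' _ _).trans ?_
        rw [hy, (show g' (x ⊗ₜ[R] (1:S)) = g (x ⊗ₜ[R] (1:S)) from step1 x.1 x.2)]
        exact (hgb _ _).symm
      · intro r y hy x
        rw [← Algebra.smul_def, tmul_smul, map_smul, map_smul, hy x]
      · intro s1 s2 _ _ ih1 ih2 y hy x
        rw [add_mul, TensorProduct.tmul_add, map_add, map_add, ih1 y hy x, ih2 y hy x]
      · intro s1 s2 _ _ ih1 ih2 y hy x
        rw [mul_assoc]
        exact ih1 (s2 * y) (ih2 y hy) x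
    intro y x
    have h := q y 1 (fun x => step1 x.1 x.2) x
    rwa [mul_one] at h
  apply LinearMap.ext
  intro a
  induction a using TensorProduct.induction_on with
  | zero => simp
  | tmul x y => exact step2 y x
  | add u v hu hv => rw [map_add, map_add, hu, hv]
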